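/- The convex hull in ℝ⁴ of the two skew equilateral triangles {(2,1,1,0),(1,1,0,0),(1,0,1,0)} and {(2,0,0,0),(1,1,1,1),(1,1,1,−1)} is a 4-dimensional polytope with 4-dimensional volume 1/4. -/

import Mathlib

open MeasureTheory

/-- Cell 𝒫₄ of the D₄ honeycomb: the convex hull of two skew equilateral
triangles. -/
noncomputable def cellP4 : Set (Fin 4 → ℝ) :=
  convexHull ℝ
    {![2,1,1,0], ![1,1,0,0], ![1,0,1,0], ![2,0,0,0], ![1,1,1,1], ![1,1,1,-1]}

open Set
/-- The "order region" of monotone tuples in the cube. -/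
def ordCube (σ : Equiv.Perm (Fin 4)) : Set (Fin 4 → ℝ) :=
  {y | y ∈ Icc (0 : Fin 4 → ℝ) 1 ∧ Monotone (y ∘ σ)}

lemma measurableSet_ordCube (σ : Equiv.Perm (Fin 4)) : MeasurableSet (ordCube σ) := by
  have h1 : MeasurableSet (Icc (0 : Fin 4 → ℝ) 1) := measurableSet_Icc
  have h2 : MeasurableSet {y : Fin 4 → ℝ | Monotone (y ∘ σ)} := by
    have : {y : Fin 4 → ℝ | Monotone (y ∘ σ)} =
        ⋂ (i : Fin 4) (j : Fin 4) (_ : i ≤ j), {y | y (σ i) ≤ y (σ j)} := by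
      ext y
      simp only [mem_setOf_eq, mem_iInter]
      exact ⟨fun h i j hij => h hij, fun h i j hij => h i j hij⟩
    rw [this]
    exact MeasurableSet.iInter fun i => MeasurableSet.iInter fun j =>
      MeasurableSet.iInter fun _ => measurableSet_le (measurable_pi_apply _) (measurable_pi_apply _)
  exact h1.inter h2

lemma volume_ordCube (σ : Equiv.Perm (Fin 4)) : volume (ordCube σ) = volume (ordCube 1) := by
  have hmp := volume_measurePreserving_piCongrLeft (fun _ : Fin 4 => ℝ) σ.symm
  have him : (MeasurableEquiv.piCongrLeft (fun _ : Fin 4 => ℝ) σ.symm) ⁻¹' (ordCube 1) = ordCube σ := by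
    ext y
    have hTy : (MeasurableEquiv.piCongrLeft (fun _ : Fin 4 => ℝ) σ.symm) y = y ∘ σ := by
      funext b
      simp [MeasurableEquiv.piCongrLeft, Equiv.piCongrLeft]
    have hIcc : (y ∘ σ) ∈ Icc (0 : Fin 4 → ℝ) 1 ↔ y ∈ Icc (0 : Fin 4 → ℝ) 1 := by
      constructor
      · rintro ⟨h0, h1⟩
        exact ⟨fun i => by simpa using h0 (σ.symm i), fun i => by simpa using h1 (σ.symm i)⟩
      · rintro ⟨h0, h1⟩
        exact ⟨fun i => h0 (σ i), fun i => h1 (σ i)⟩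
    simp only [mem_preimage, ordCube, mem_setOf_eq, hTy, Equiv.Perm.coe_one, Function.comp_id,
      hIcc]
  rw [← him, hmp.measure_preimage (measurableSet_ordCube 1).nullMeasurableSet]

/-- The set of non-injective tuples is null. -/
lemma volume_nonInj : volume {y : Fin 4 → ℝ | ¬ Function.Injective y} = 0 := by
  have hsub : {y : Fin 4 → ℝ | ¬ Function.Injective y} ⊆
      ⋃ (i : Fin 4) (j : Fin 4) (_ : i ≠ j), {y : Fin 4 → ℝ | y i = y j} := by
    intro y hy
    simp only [mem_setOf_eq, Function.Injective, not_forall] at hy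
    obtain ⟨i, j, hij, hne⟩ := hy
    simp only [mem_iUnion]
    exact ⟨i, j, hne, hij⟩
  refine measure_mono_null hsub ?_
  refine measure_iUnion_null fun i => measure_iUnion_null fun j => measure_iUnion_null fun hij => ?_
  have hker : {y : Fin 4 → ℝ | y i = y j} =
      (LinearMap.ker ((LinearMap.proj i : (Fin 4 → ℝ) →ₗ[ℝ] ℝ) - LinearMap.proj j) : Set (Fin 4 → ℝ)) := by
    ext y
    simp [sub_eq_zero]
  rw [hker]
  refine Measure.addHaar_submodule _ _ ?_
  intro htop
  have : Pi.single i (1:ℝ) ∈ (LinearMap.ker ((LinearMap.proj i : (Fin 4 → ℝ) →ₗ[ℝ] ℝ) - LinearMap.proj j)) := by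
    rw [htop]; trivial
  simp [LinearMap.mem_ker, Pi.single_apply, hij, Ne.symm hij] at this

lemma aedisjoint_ordCube {σ τ : Equiv.Perm (Fin 4)} (h : σ ≠ τ) :
    volume (ordCube σ ∩ ordCube τ) = 0 := by
  refine measure_mono_null (fun y hy => ?_) volume_nonInj
  obtain ⟨⟨_, hσ⟩, ⟨_, hτ⟩⟩ := hy
  simp only [mem_setOf_eq]
  intro hinj
  apply h
  have h1 : y ∘ σ = y ∘ Tuple.sort y := Tuple.comp_sort_eq_comp_iff_monotone.mpr hσ
  have h2 : y ∘ τ = y ∘ Tuple.sort y := Tuple.comp_sort_eq_comp_iff_monotone.mpr hτ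
  have : y ∘ σ = y ∘ τ := h1.trans h2.symm
  apply Equiv.ext
  intro i
  exact hinj (congrFun this i)

lemma union_ordCube : (⋃ σ : Equiv.Perm (Fin 4), ordCube σ) = Icc (0 : Fin 4 → ℝ) 1 := by
  ext y
  simp only [mem_iUnion]
  constructor
  · rintro ⟨σ, hσ, _⟩; exact hσ
  · intro hy
    exact ⟨Tuple.sort y, hy, Tuple.monotone_sort y⟩

lemma volume_ordCube_one : volume (ordCube 1) = ENNReal.ofReal (1 / 24) := by
  have hsum : volume (⋃ σ ∈ (Finset.univ : Finset (Equiv.Perm (Fin 4))), ordCube σ) =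
      ∑ σ : Equiv.Perm (Fin 4), volume (ordCube σ) := by
    refine measure_biUnion_finset₀ ?_ fun σ _ => (measurableSet_ordCube σ).nullMeasurableSet
    intro σ _ τ _ hστ
    exact aedisjoint_ordCube hστ
  have hcube : volume (Icc (0 : Fin 4 → ℝ) 1) = 1 := by
    rw [Real.volume_Icc_pi]
    simp
  have hU : (⋃ σ ∈ (Finset.univ : Finset (Equiv.Perm (Fin 4))), ordCube σ)
      = Icc (0 : Fin 4 → ℝ) 1 := by
    simpa using union_ordCube
  rw [hU, hcube] at hsum
  have hconst : ∀ σ : Equiv.Perm (Fin 4), volume (ordCube σ) = volume (ordCube 1) :=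
    volume_ordCube
  rw [Finset.sum_congr rfl (fun σ _ => hconst σ), Finset.sum_const] at hsum
  have hcard : (Finset.univ : Finset (Equiv.Perm (Fin 4))).card = 24 := by
    simp [Fintype.card_perm]
    decide
  rw [hcard] at hsum
  have hfin : volume (ordCube 1) ≠ ⊤ := by
    have hle : volume (ordCube 1) ≤ volume (Icc (0 : Fin 4 → ℝ) 1) :=
      measure_mono fun y hy => hy.1
    rw [hcube] at hle
    exact (lt_of_le_of_lt hle ENNReal.one_lt_top).ne
  have : (24 : ℕ) • volume (ordCube 1) = 1 := hsum.symm
  rw [nsmul_eq_mul] at this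
  have h24 : ((24:ℕ) : ENNReal) ≠ 0 := by norm_num
  have h24' : ((24:ℕ) : ENNReal) ≠ ⊤ := by norm_num
  have hv : volume (ordCube 1) = 1 / ((24:ℕ):ENNReal) := by
    rw [ENNReal.eq_div_iff h24 h24']
    exact this
  rw [hv, ENNReal.ofReal_div_of_pos (by norm_num), ENNReal.ofReal_one]
  norm_num

lemma convex_ordCube_one : Convex ℝ (ordCube 1) := by
  have h1 : Convex ℝ (Icc (0 : Fin 4 → ℝ) 1) := convex_Icc _ _
  have h2 : Convex ℝ {y : Fin 4 → ℝ | Monotone (y ∘ (1 : Equiv.Perm (Fin 4)))} := by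
    intro f hf g hg a b ha hb hab
    intro i j hij
    simp only [Equiv.Perm.coe_one, Function.comp_id, Pi.add_apply, Pi.smul_apply,
      smul_eq_mul] at *
    exact add_le_add (mul_le_mul_of_nonneg_left (hf hij) ha)
      (mul_le_mul_of_nonneg_left (hg hij) hb)
  exact h1.inter h2

lemma ordCube_eq_hull : ordCube 1 = convexHull ℝ
    {![0,0,0,0], ![0,0,0,1], ![0,0,1,1], ![0,1,1,1], (![1,1,1,1] : Fin 4 → ℝ)} := by
  apply Subset.antisymm
  · rintro y ⟨⟨h0, h1⟩, hmono⟩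
    simp only [Equiv.Perm.coe_one, Function.comp_id] at hmono
    have hc := convex_convexHull ℝ
      ({![0,0,0,0], ![0,0,0,1], ![0,0,1,1], ![0,1,1,1], (![1,1,1,1] : Fin 4 → ℝ)} : Set (Fin 4 → ℝ))
    have key := hc.sum_mem (t := (Finset.univ : Finset (Fin 5)))
      (w := ![1 - y 3, y 3 - y 2, y 2 - y 1, y 1 - y 0, y 0])
      (z := ![![0,0,0,0], ![0,0,0,1], ![0,0,1,1], ![0,1,1,1], ![1,1,1,1]])
      ?_ ?_ ?_
    · convert key using 1
      funext i
      simp only [Fin.sum_univ_five, Pi.add_apply, Pi.smul_apply, smul_eq_mul]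
      fin_cases i <;>
        simp only [Matrix.cons_val] <;> norm_num [Matrix.vecHead, Matrix.vecTail] <;> first | rfl | ring
    · intro i _
      have e0 := h0 0
      have e1 := h1 3
      have m01 := hmono (show (0:Fin 4) ≤ 1 by decide)
      have m12 := hmono (show (1:Fin 4) ≤ 2 by decide)
      have m23 := hmono (show (2:Fin 4) ≤ 3 by decide)
      simp only [Pi.zero_apply] at e0
      simp only [Pi.one_apply] at e1
      fin_cases i <;> simp only [Matrix.cons_val] <;> norm_num [Matrix.vecHead, Matrix.vecTail] <;> linarith
    · simp [Fin.sum_univ_five]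
    · intro i _
      apply subset_convexHull
      fin_cases i <;> simp
  · apply convexHull_min ?_ convex_ordCube_one
    intro w hw
    have hmem : ∀ v ∈ ({![0,0,0,0], ![0,0,0,1], ![0,0,1,1], ![0,1,1,1],
        (![1,1,1,1] : Fin 4 → ℝ)} : Set (Fin 4 → ℝ)), v ∈ ordCube 1 := by
      intro v hv
      rcases hv with rfl | rfl | rfl | rfl | rfl <;>
      · refine ⟨⟨fun i => ?_, fun i => ?_⟩, ?_⟩
        · fin_cases i <;> norm_num
        · fin_cases i <;> norm_num
        · intro i j hij
          fin_cases i <;> fin_cases j <;> simp_all <;> norm_num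
          all_goals (exfalso; exact absurd hij (by decide))
    exact hmem w hw

/-- Volume of a 4-simplex given by 5 vertices. -/
lemma volume_hull5 (q : Fin 5 → (Fin 4 → ℝ))
    (M : Matrix (Fin 4) (Fin 4) ℝ)
    (hM : M = Matrix.of fun i k => (![q 4 - q 3, q 3 - q 2, q 2 - q 1, q 1 - q 0] k) i) :
    volume (convexHull ℝ {q 0, q 1, q 2, q 3, q 4}) =
      ENNReal.ofReal |M.det| * ENNReal.ofReal (1 / 24) := by
  have hL : ∀ v : Fin 4 → ℝ, Matrix.toLin' M v = M.mulVec v := fun v => Matrix.toLin'_apply M v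
  -- images of the vertices of the order simplex
  have h0 : M.mulVec ![0,0,0,0] = 0 := by
    funext i
    simp [hM, Matrix.mulVec, dotProduct, Fin.sum_univ_four]
  have h1 : M.mulVec ![0,0,0,1] = q 1 - q 0 := by
    funext i
    simp [hM, Matrix.mulVec, dotProduct, Fin.sum_univ_four, Matrix.vecHead, Matrix.vecTail]
  have h2 : M.mulVec ![0,0,1,1] = q 2 - q 0 := by
    funext i
    simp [hM, Matrix.mulVec, dotProduct, Fin.sum_univ_four, Matrix.vecHead, Matrix.vecTail]
  have h3 : M.mulVec ![0,1,1,1] = q 3 - q 0 := by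
    funext i
    simp [hM, Matrix.mulVec, dotProduct, Fin.sum_univ_four, Matrix.vecHead, Matrix.vecTail]
  have h4 : M.mulVec ![1,1,1,1] = q 4 - q 0 := by
    funext i
    simp [hM, Matrix.mulVec, dotProduct, Fin.sum_univ_four, Matrix.vecHead, Matrix.vecTail]
  have htrans : ∀ T : Set (Fin 4 → ℝ), (fun x => q 0 + x) '' (convexHull ℝ T)
      = convexHull ℝ ((fun x => q 0 + x) '' T) := by
    intro T
    have := (AffineEquiv.constVAdd ℝ (Fin 4 → ℝ) (q 0)).toAffineMap.image_convexHull T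
    exact this
  have himg : convexHull ℝ {q 0, q 1, q 2, q 3, q 4}
      = (fun x => q 0 + x) '' (Matrix.toLin' M '' ordCube 1) := by
    rw [ordCube_eq_hull, LinearMap.image_convexHull, htrans]
    congr 1
    simp only [Set.image_insert_eq, Set.image_singleton, hL, h0, h1, h2, h3, h4]
    simp only [add_zero, add_sub_cancel]
  rw [himg]
  rw [Set.image_add_left, measure_preimage_add]
  rw [Measure.addHaar_image_linearMap, LinearMap.det_toLin', volume_ordCube_one]

lemma vol_S1 : volume (convexHull ℝ
    {![2,1,1,0], ![1,1,0,0], ![1,0,1,0], ![2,0,0,0], (![1,1,1,1] : Fin 4 → ℝ)}) =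
    ENNReal.ofReal (1 / 12) := by
  have h := volume_hull5 ![![2,1,1,0], ![1,1,0,0], ![1,0,1,0], ![2,0,0,0], ![1,1,1,1]]
    (!![-1,1,0,-1; 1,0,-1,0; 1,-1,1,-1; 1,0,0,0]) ?_
  · have hdet : (!![-1,1,0,-1; 1,0,-1,0; 1,-1,1,-1; (1:ℝ),0,0,0]).det = -2 := by
      simp [Matrix.det_succ_row_zero, Fin.sum_univ_succ, Fin.succAbove]; norm_num
    rw [hdet] at h
    simp only [Matrix.cons_val_zero, Matrix.cons_val_one, Matrix.head_cons, Matrix.cons_val] at h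
    rw [show |(-2 : ℝ)| = 2 by norm_num] at h
    rw [← ENNReal.ofReal_mul (by norm_num)] at h
    norm_num at h
    convert h using 2
  · funext i k
    fin_cases i <;> fin_cases k <;>
      simp <;> norm_num

lemma vol_S2 : volume (convexHull ℝ
    {![2,1,1,0], ![1,1,0,0], ![1,0,1,0], ![2,0,0,0], (![1,1,1,-1] : Fin 4 → ℝ)}) =
    ENNReal.ofReal (1 / 12) := by
  have h := volume_hull5 ![![2,1,1,0], ![1,1,0,0], ![1,0,1,0], ![2,0,0,0], ![1,1,1,-1]]
    (!![-1,1,0,-1; 1,0,-1,0; 1,-1,1,-1; -1,0,0,0]) ?_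
  · have hdet : (!![-1,1,0,-1; 1,0,-1,0; 1,-1,1,-1; (-1:ℝ),0,0,0]).det = 2 := by
      simp [Matrix.det_succ_row_zero, Fin.sum_univ_succ, Fin.succAbove]; norm_num
    rw [hdet] at h
    simp only [Matrix.cons_val_zero, Matrix.cons_val_one, Matrix.head_cons, Matrix.cons_val] at h
    rw [show |(2 : ℝ)| = 2 by norm_num] at h
    rw [← ENNReal.ofReal_mul (by norm_num)] at h
    norm_num at h
    convert h using 2
  · funext i k
    fin_cases i <;> fin_cases k <;>
      simp <;> norm_num

lemma vol_S3 : volume (convexHull ℝ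
    {![2,1,1,0], ![1,1,0,0], ![1,0,1,0], ![1,1,1,1], (![1,1,1,-1] : Fin 4 → ℝ)}) =
    ENNReal.ofReal (1 / 12) := by
  have h := volume_hull5 ![![2,1,1,0], ![1,1,0,0], ![1,0,1,0], ![1,1,1,1], ![1,1,1,-1]]
    (!![0,0,0,-1; 0,1,-1,0; 0,0,1,-1; -2,1,0,0]) ?_
  · have hdet : (!![0,0,0,-1; 0,1,-1,0; 0,0,1,-1; (-2:ℝ),1,0,0]).det = -2 := by
      simp [Matrix.det_succ_row_zero, Fin.sum_univ_succ, Fin.succAbove]; norm_num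
    rw [hdet] at h
    simp only [Matrix.cons_val_zero, Matrix.cons_val_one, Matrix.head_cons, Matrix.cons_val] at h
    rw [show |(-2 : ℝ)| = 2 by norm_num] at h
    rw [← ENNReal.ofReal_mul (by norm_num)] at h
    norm_num at h
    convert h using 2
  · funext i k
    fin_cases i <;> fin_cases k <;>
      simp <;> norm_num

section decomposition

noncomputable instance : DecidableEq (Fin 4 → ℝ) := fun _ _ => Classical.dec _

noncomputable def P6 : Finset (Fin 4 → ℝ) :=
  {![2,1,1,0], ![1,1,0,0], ![1,0,1,0], ![2,0,0,0], ![1,1,1,1], ![1,1,1,-1]}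

lemma cellP4_subset_union :
    convexHull ℝ ({![2,1,1,0], ![1,1,0,0], ![1,0,1,0], ![2,0,0,0], ![1,1,1,1],
        (![1,1,1,-1] : Fin 4 → ℝ)} : Set (Fin 4 → ℝ)) ⊆
      convexHull ℝ {![2,1,1,0], ![1,1,0,0], ![1,0,1,0], ![2,0,0,0], (![1,1,1,1] : Fin 4 → ℝ)} ∪
      convexHull ℝ {![2,1,1,0], ![1,1,0,0], ![1,0,1,0], ![2,0,0,0], (![1,1,1,-1] : Fin 4 → ℝ)} ∪
      convexHull ℝ {![2,1,1,0], ![1,1,0,0], ![1,0,1,0], ![1,1,1,1], (![1,1,1,-1] : Fin 4 → ℝ)} := by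
  have hco : ({![2,1,1,0], ![1,1,0,0], ![1,0,1,0], ![2,0,0,0], ![1,1,1,1],
      (![1,1,1,-1] : Fin 4 → ℝ)} : Set (Fin 4 → ℝ)) = (P6 : Set (Fin 4 → ℝ)) := by
    simp [P6]
  intro x hx
  rw [hco, Finset.mem_convexHull'] at hx
  obtain ⟨w, hw0, hw1, hwx⟩ := hx
  have hne01 : (![2,1,1,0] : Fin 4 → ℝ) ≠ ![1,1,0,0] := by
    intro h; have := congrFun h 0; simp only [Matrix.cons_val] at this; norm_num at this
  have hne02 : (![2,1,1,0] : Fin 4 → ℝ) ≠ ![1,0,1,0] := by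
    intro h; have := congrFun h 1; simp only [Matrix.cons_val] at this; norm_num at this
  have hne03 : (![2,1,1,0] : Fin 4 → ℝ) ≠ ![2,0,0,0] := by
    intro h; have := congrFun h 1; simp only [Matrix.cons_val] at this; norm_num at this
  have hne04 : (![2,1,1,0] : Fin 4 → ℝ) ≠ ![1,1,1,1] := by
    intro h; have := congrFun h 0; simp only [Matrix.cons_val] at this; norm_num at this
  have hne05 : (![2,1,1,0] : Fin 4 → ℝ) ≠ ![1,1,1,-1] := by
    intro h; have := congrFun h 0; simp only [Matrix.cons_val] at this; norm_num at this
  have hne12 : (![1,1,0,0] : Fin 4 → ℝ) ≠ ![1,0,1,0] := by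
    intro h; have := congrFun h 1; simp only [Matrix.cons_val] at this; norm_num at this
  have hne13 : (![1,1,0,0] : Fin 4 → ℝ) ≠ ![2,0,0,0] := by
    intro h; have := congrFun h 1; simp only [Matrix.cons_val] at this; norm_num at this
  have hne14 : (![1,1,0,0] : Fin 4 → ℝ) ≠ ![1,1,1,1] := by
    intro h; have := congrFun h 2; simp only [Matrix.cons_val] at this; norm_num at this
  have hne15 : (![1,1,0,0] : Fin 4 → ℝ) ≠ ![1,1,1,-1] := by
    intro h; have := congrFun h 2; simp only [Matrix.cons_val] at this; norm_num at this
  have hne23 : (![1,0,1,0] : Fin 4 → ℝ) ≠ ![2,0,0,0] := by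
    intro h; have := congrFun h 2; simp only [Matrix.cons_val] at this; norm_num at this
  have hne24 : (![1,0,1,0] : Fin 4 → ℝ) ≠ ![1,1,1,1] := by
    intro h; have := congrFun h 1; simp only [Matrix.cons_val] at this; norm_num at this
  have hne25 : (![1,0,1,0] : Fin 4 → ℝ) ≠ ![1,1,1,-1] := by
    intro h; have := congrFun h 1; simp only [Matrix.cons_val] at this; norm_num at this
  have hne34 : (![2,0,0,0] : Fin 4 → ℝ) ≠ ![1,1,1,1] := by
    intro h; have := congrFun h 0; simp only [Matrix.cons_val] at this; norm_num at this
  have hne35 : (![2,0,0,0] : Fin 4 → ℝ) ≠ ![1,1,1,-1] := by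
    intro h; have := congrFun h 0; simp only [Matrix.cons_val] at this; norm_num at this
  have hne45 : (![1,1,1,1] : Fin 4 → ℝ) ≠ ![1,1,1,-1] := by
    intro h; have := congrFun h 3; simp only [Matrix.cons_val] at this; norm_num at this
  have hnm0 : (![2,1,1,0] : Fin 4 → ℝ) ∉ ({![1,1,0,0], ![1,0,1,0], ![2,0,0,0], ![1,1,1,1], ![1,1,1,-1]} : Finset (Fin 4 → ℝ)) := by
    simp only [Finset.mem_insert, Finset.mem_singleton]
    push_neg
    exact ⟨hne01, hne02, hne03, hne04, hne05⟩
  have hnm1 : (![1,1,0,0] : Fin 4 → ℝ) ∉ ({![1,0,1,0], ![2,0,0,0], ![1,1,1,1], ![1,1,1,-1]} : Finset (Fin 4 → ℝ)) := by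
    simp only [Finset.mem_insert, Finset.mem_singleton]
    push_neg
    exact ⟨hne12, hne13, hne14, hne15⟩
  have hnm2 : (![1,0,1,0] : Fin 4 → ℝ) ∉ ({![2,0,0,0], ![1,1,1,1], ![1,1,1,-1]} : Finset (Fin 4 → ℝ)) := by
    simp only [Finset.mem_insert, Finset.mem_singleton]
    push_neg
    exact ⟨hne23, hne24, hne25⟩
  have hnm3 : (![2,0,0,0] : Fin 4 → ℝ) ∉ ({![1,1,1,1], ![1,1,1,-1]} : Finset (Fin 4 → ℝ)) := by
    simp only [Finset.mem_insert, Finset.mem_singleton]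
    push_neg
    exact ⟨hne34, hne35⟩
  have hnm4 : (![1,1,1,1] : Fin 4 → ℝ) ∉ ({![1,1,1,-1]} : Finset (Fin 4 → ℝ)) := by
    simp only [Finset.mem_singleton]
    exact hne45
  have hP6 : P6 = insert ![2,1,1,0] (insert ![1,1,0,0] (insert ![1,0,1,0]
      (insert ![2,0,0,0] (insert ![1,1,1,1] ({![1,1,1,-1]} : Finset (Fin 4 → ℝ)))))) := rfl
  set a0 := w ![2,1,1,0] with ha0
  set a1 := w ![1,1,0,0] with ha1
  set a2 := w ![1,0,1,0] with ha2
  set a3 := w ![2,0,0,0] with ha3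
  set a4 := w ![1,1,1,1] with ha4
  set a5 := w ![1,1,1,-1] with ha5
  rw [hP6, Finset.sum_insert hnm0, Finset.sum_insert hnm1, Finset.sum_insert hnm2,
    Finset.sum_insert hnm3, Finset.sum_insert hnm4, Finset.sum_singleton] at hw1 hwx
  have h0 : 0 ≤ a0 := hw0 _ (by rw [hP6]; simp)
  have h1 : 0 ≤ a1 := hw0 _ (by rw [hP6]; simp)
  have h2 : 0 ≤ a2 := hw0 _ (by rw [hP6]; simp)
  have h3 : 0 ≤ a3 := hw0 _ (by rw [hP6]; simp)
  have h4 : 0 ≤ a4 := hw0 _ (by rw [hP6]; simp)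
  have h5 : 0 ≤ a5 := hw0 _ (by rw [hP6]; simp)
  have useS1 : a5 ≤ a3 → a5 ≤ a4 → x ∈ convexHull ℝ ({![2,1,1,0], ![1,1,0,0], ![1,0,1,0], ![2,0,0,0], ![1,1,1,1]} : Set (Fin 4 → ℝ)) := by
    intro hm1 hm2
    have hx' : x = ∑ i : Fin 5, (![a0+a5, a1+a5, a2+a5, a3-a5, a4-a5]) i • (![![2,1,1,0], ![1,1,0,0], ![1,0,1,0], ![2,0,0,0], ![1,1,1,1]] : Fin 5 → Fin 4 → ℝ) i := by
      rw [← hwx]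
      funext j
      simp only [Fin.sum_univ_five, Pi.add_apply, Pi.smul_apply, smul_eq_mul]
      fin_cases j <;> simp only [Matrix.cons_val] <;> norm_num [Matrix.vecHead, Matrix.vecTail] <;> ring
    rw [hx']
    refine (convex_convexHull ℝ _).sum_mem ?_ ?_ ?_
    · intro i _
      fin_cases i <;> simp only [Matrix.cons_val] <;> norm_num [Matrix.vecHead, Matrix.vecTail] <;> linarith
    · simp only [Fin.sum_univ_five, Matrix.cons_val_zero, Matrix.cons_val_one, Matrix.head_cons,
        Matrix.vecHead, Matrix.vecTail, Matrix.cons_val]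
      norm_num
      linarith
    · intro i _
      apply subset_convexHull
      fin_cases i <;> simp
  have useS2 : a4 ≤ a3 → a4 ≤ a5 → x ∈ convexHull ℝ ({![2,1,1,0], ![1,1,0,0], ![1,0,1,0], ![2,0,0,0], ![1,1,1,-1]} : Set (Fin 4 → ℝ)) := by
    intro hm1 hm2
    have hx' : x = ∑ i : Fin 5, (![a0+a4, a1+a4, a2+a4, a3-a4, a5-a4]) i • (![![2,1,1,0], ![1,1,0,0], ![1,0,1,0], ![2,0,0,0], ![1,1,1,-1]] : Fin 5 → Fin 4 → ℝ) i := by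
      rw [← hwx]
      funext j
      simp only [Fin.sum_univ_five, Pi.add_apply, Pi.smul_apply, smul_eq_mul]
      fin_cases j <;> simp only [Matrix.cons_val] <;> norm_num [Matrix.vecHead, Matrix.vecTail] <;> ring
    rw [hx']
    refine (convex_convexHull ℝ _).sum_mem ?_ ?_ ?_
    · intro i _
      fin_cases i <;> simp only [Matrix.cons_val] <;> norm_num [Matrix.vecHead, Matrix.vecTail] <;> linarith
    · simp only [Fin.sum_univ_five, Matrix.cons_val_zero, Matrix.cons_val_one, Matrix.head_cons,
        Matrix.vecHead, Matrix.vecTail, Matrix.cons_val]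
      norm_num
      linarith
    · intro i _
      apply subset_convexHull
      fin_cases i <;> simp
  have useS3 : a3 ≤ a4 → a3 ≤ a5 → x ∈ convexHull ℝ ({![2,1,1,0], ![1,1,0,0], ![1,0,1,0], ![1,1,1,1], ![1,1,1,-1]} : Set (Fin 4 → ℝ)) := by
    intro hm1 hm2
    have hx' : x = ∑ i : Fin 5, (![a0+a3, a1+a3, a2+a3, a4-a3, a5-a3]) i • (![![2,1,1,0], ![1,1,0,0], ![1,0,1,0], ![1,1,1,1], ![1,1,1,-1]] : Fin 5 → Fin 4 → ℝ) i := by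
      rw [← hwx]
      funext j
      simp only [Fin.sum_univ_five, Pi.add_apply, Pi.smul_apply, smul_eq_mul]
      fin_cases j <;> simp only [Matrix.cons_val] <;> norm_num [Matrix.vecHead, Matrix.vecTail] <;> ring
    rw [hx']
    refine (convex_convexHull ℝ _).sum_mem ?_ ?_ ?_
    · intro i _
      fin_cases i <;> simp only [Matrix.cons_val] <;> norm_num [Matrix.vecHead, Matrix.vecTail] <;> linarith
    · simp only [Fin.sum_univ_five, Matrix.cons_val_zero, Matrix.cons_val_one, Matrix.head_cons,
        Matrix.vecHead, Matrix.vecTail, Matrix.cons_val]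
      norm_num
      linarith
    · intro i _
      apply subset_convexHull
      fin_cases i <;> simp
  rcases le_total a3 a4 with h34 | h43
  · rcases le_total a3 a5 with h35 | h53
    · exact Or.inr (useS3 h34 h35)
    · exact Or.inl (Or.inl (useS1 h53 (le_trans h53 h34)))
  · rcases le_total a4 a5 with h45 | h54
    · exact Or.inl (Or.inr (useS2 h43 h45))
    · exact Or.inl (Or.inl (useS1 (le_trans h54 h43) h54))


end decomposition

lemma null_inter_of_sep (g : (Fin 4 → ℝ) →ₗ[ℝ] ℝ) (v : Fin 4 → ℝ) (hv : g v ≠ 0)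
    (S T : Set (Fin 4 → ℝ)) (hS : ∀ u ∈ S, 0 ≤ g u) (hT : ∀ u ∈ T, g u ≤ 0) :
    volume (convexHull ℝ S ∩ convexHull ℝ T) = 0 := by
  have h1 : convexHull ℝ S ⊆ {x | 0 ≤ g x} :=
    convexHull_min hS (convex_halfSpace_ge g.isLinear 0)
  have h2 : convexHull ℝ T ⊆ {x | g x ≤ 0} :=
    convexHull_min hT (convex_halfSpace_le g.isLinear 0)
  have hsub : convexHull ℝ S ∩ convexHull ℝ T ⊆ (LinearMap.ker g : Set (Fin 4 → ℝ)) := by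
    intro x hx
    have : g x = 0 := le_antisymm (h2 hx.2) (h1 hx.1)
    simpa [LinearMap.mem_ker] using this
  refine measure_mono_null hsub (Measure.addHaar_submodule _ _ ?_)
  intro htop
  exact hv (by simpa [LinearMap.mem_ker] using (htop ▸ Submodule.mem_top : v ∈ LinearMap.ker g))

lemma nullmeas_hull (S : Set (Fin 4 → ℝ)) (hS : S.Finite) :
    NullMeasurableSet (convexHull ℝ S) volume :=
  ((hS.isCompact_convexHull (𝕜 := ℝ)).isClosed.measurableSet).nullMeasurableSet

noncomputable def gD : (Fin 4 → ℝ) →ₗ[ℝ] ℝ :=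
  LinearMap.proj (R := ℝ) (φ := fun _ : Fin 4 => ℝ) 3

noncomputable def gAC : (Fin 4 → ℝ) →ₗ[ℝ] ℝ :=
  LinearMap.proj (R := ℝ) (φ := fun _ : Fin 4 => ℝ) 0 - LinearMap.proj 1
    - LinearMap.proj 2 + LinearMap.proj 3

noncomputable def gBC : (Fin 4 → ℝ) →ₗ[ℝ] ℝ :=
  LinearMap.proj (R := ℝ) (φ := fun _ : Fin 4 => ℝ) 0 - LinearMap.proj 1
    - LinearMap.proj 2 - LinearMap.proj 3

/-- The cell 𝒫₄ has 4-dimensional volume 1/4. -/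
theorem cellP4_volume : volume cellP4 = ENNReal.ofReal (1 / 4) := by
  set A := convexHull ℝ
    ({![2,1,1,0], ![1,1,0,0], ![1,0,1,0], ![2,0,0,0], (![1,1,1,1] : Fin 4 → ℝ)} : Set (Fin 4 → ℝ)) with hA
  set B := convexHull ℝ
    ({![2,1,1,0], ![1,1,0,0], ![1,0,1,0], ![2,0,0,0], (![1,1,1,-1] : Fin 4 → ℝ)} : Set (Fin 4 → ℝ)) with hB
  set C := convexHull ℝ
    ({![2,1,1,0], ![1,1,0,0], ![1,0,1,0], ![1,1,1,1], (![1,1,1,-1] : Fin 4 → ℝ)} : Set (Fin 4 → ℝ)) with hC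
  have hdecomp : cellP4 = A ∪ B ∪ C := by
    apply Set.Subset.antisymm
    · exact cellP4_subset_union
    · refine Set.union_subset (Set.union_subset ?_ ?_) ?_ <;>
      · apply convexHull_mono
        intro u hu
        rcases hu with rfl | rfl | rfl | rfl | rfl <;> simp [cellP4]
  -- the three pairwise intersections are null
  have hAB : volume (A ∩ B) = 0 := by
    refine null_inter_of_sep gD ![0,0,0,1] (by simp [gD, LinearMap.proj_apply]) _ _ ?_ ?_
    · rintro u (rfl | rfl | rfl | rfl | rfl) <;> simp [gD, LinearMap.proj_apply] <;> norm_num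
    · rintro u (rfl | rfl | rfl | rfl | rfl) <;> simp [gD, LinearMap.proj_apply] <;> norm_num
  have hAC : volume (A ∩ C) = 0 := by
    refine null_inter_of_sep gAC ![1,0,0,0] (by simp [gAC, LinearMap.proj_apply]) _ _ ?_ ?_
    · rintro u (rfl | rfl | rfl | rfl | rfl) <;> simp [gAC, LinearMap.proj_apply] <;> norm_num
    · rintro u (rfl | rfl | rfl | rfl | rfl) <;> simp [gAC, LinearMap.proj_apply] <;> norm_num
  have hBC : volume (B ∩ C) = 0 := by
    refine null_inter_of_sep gBC ![1,0,0,0] (by simp [gBC, LinearMap.proj_apply]) _ _ ?_ ?_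
    · rintro u (rfl | rfl | rfl | rfl | rfl) <;> simp [gBC, LinearMap.proj_apply] <;> norm_num
    · rintro u (rfl | rfl | rfl | rfl | rfl) <;> simp [gBC, LinearMap.proj_apply] <;> norm_num
  have hmB : NullMeasurableSet B volume := nullmeas_hull _ (Set.toFinite _)
  have hmC : NullMeasurableSet C volume := nullmeas_hull _ (Set.toFinite _)
  have hdAB : AEDisjoint volume A B := hAB
  have hdC : AEDisjoint volume (A ∪ B) C := by
    have : (A ∪ B) ∩ C ⊆ (A ∩ C) ∪ (B ∩ C) := by
      rintro x ⟨hx1 | hx1, hx2⟩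
      · exact Or.inl ⟨hx1, hx2⟩
      · exact Or.inr ⟨hx1, hx2⟩
    exact measure_mono_null this (measure_union_null hAC hBC)
  rw [hdecomp, measure_union₀ hmC hdC, measure_union₀ hmB hdAB, vol_S1, vol_S2, vol_S3]
  rw [← ENNReal.ofReal_add (by norm_num) (by norm_num), ← ENNReal.ofReal_add (by norm_num) (by norm_num)]
  norm_num
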